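/- Let e_1, …, e_7 be pairwise distinct complex numbers and F the genus-3 Kleinian 2-polar of f(x) = 4∏_{m=1}^{7}(x−e_m). Let s_l be the elementary symmetric functions of {e_1,e_2,e_3} and S_l those of {e_4,e_5,e_6,e_7}. Define p_{33}=s_1, p_{23}=−s_2, p_{13}=s_3, p_{12}=−s_3S_1−S_4, p_{11}=s_3S_2+s_1S_4, p_{22}=S_3+2s_3+s_2S_1. Then for every pair i ≠ j with i,j ∈ {1,2,3}: Σ_{k,l=1}^{3} p_{kl} e_i^{k−1} e_j^{l−1} = F(e_i,e_j)/(4(e_i−e_j)²). -/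

import Mathlib

open Finset Polynomial

/-- Elementary symmetric function of degree `n` of the values of `f` on `s`. -/
noncomputable def esymm {ι : Type*} [DecidableEq ι] (s : Finset ι) (n : ℕ) (f : ι → ℂ) : ℂ :=
  ∑ t ∈ Finset.powersetCard n s, ∏ i ∈ t, f i

set_option maxHeartbeats 4000000 in
theorem stmt_4 (e : Fin 7 → ℂ) (he : Function.Injective e)
    (lam : ℕ → ℂ)
    (hlam : ∀ k, lam k = (4 * ∏ m, (X - C (e m)) : Polynomial ℂ).coeff k)
    (F : ℂ → ℂ → ℂ)
    (hF : ∀ x z, F x z = ∑ k ∈ range 4, x^k * z^k * (2 * lam (2*k) + lam (2*k+1) * (z + x)))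
    (s S : ℕ → ℂ)
    (hs : ∀ l, s l = esymm ({0, 1, 2} : Finset (Fin 7)) l e)
    (hS : ∀ l, S l = esymm ({3, 4, 5, 6} : Finset (Fin 7)) l e)
    (P : Fin 3 → Fin 3 → ℂ)
    (hP : P = !![s 3 * S 2 + s 1 * S 4, -(s 3 * S 1) - S 4, s 3;
                 -(s 3 * S 1) - S 4, S 3 + 2 * s 3 + s 2 * S 1, -(s 2);
                 s 3, -(s 2), s 1]) :
    ∀ i j : Fin 7, i ∈ ({0, 1, 2} : Finset (Fin 7)) → j ∈ ({0, 1, 2} : Finset (Fin 7)) →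
      i ≠ j →
      (∑ k : Fin 3, ∑ l : Fin 3, P k l * (e i)^(k : ℕ) * (e j)^(l : ℕ))
        = F (e i) (e j) / (4 * (e i - e j)^2) := by
  have hexp : (4 * ∏ m, (X - C (e m)) : Polynomial ℂ) = C (-(4:ℂ) * (e 0*e 1*e 2*e 3*e 4*e 5*e 6)) + C ((4:ℂ) * (e 0*e 1*e 2*e 3*e 4*e 5 + e 0*e 1*e 2*e 3*e 4*e 6 + e 0*e 1*e 2*e 3*e 5*e 6 + e 0*e 1*e 2*e 4*e 5*e 6 + e 0*e 1*e 3*e 4*e 5*e 6 + e 0*e 2*e 3*e 4*e 5*e 6 + e 1*e 2*e 3*e 4*e 5*e 6)) * X^1 + C (-(4:ℂ) * (e 0*e 1*e 2*e 3*e 4 + e 0*e 1*e 2*e 3*e 5 + e 0*e 1*e 2*e 3*e 6 + e 0*e 1*e 2*e 4*e 5 + e 0*e 1*e 2*e 4*e 6 + e 0*e 1*e 2*e 5*e 6 + e 0*e 1*e 3*e 4*e 5 + e 0*e 1*e 3*e 4*e 6 + e 0*e 1*e 3*e 5*e 6 + e 0*e 1*e 4*e 5*e 6 + e 0*e 2*e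 3*e 4*e 5 + e 0*e 2*e 3*e 4*e 6 + e 0*e 2*e 3*e 5*e 6 + e 0*e 2*e 4*e 5*e 6 + e 0*e 3*e 4*e 5*e 6 + e 1*e 2*e 3*e 4*e 5 + e 1*e 2*e 3*e 4*e 6 + e 1*e 2*e 3*e 5*e 6 + e 1*e 2*e 4*e 5*e 6 + e 1*e 3*e 4*e 5*e 6 + e 2*e 3*e 4*e 5*e 6)) * X^2 + C ((4:ℂ) * (e 0*e 1*e 2*e 3 + e 0*e 1*e 2*e 4 + e 0*e 1*e 2*e 5 + e 0*e 1*e 2*e 6 + e 0*e 1*e 3*e 4 + e 0*e 1*e 3*e 5 + e 0*e 1*e 3*e 6 + e 0*e 1*e 4*e 5 + e 0*e 1*e 4*e 6 + e 0*e 1*e 5*e 6 + e 0*e 2*e 3*e 4 + e 0*e 2*e 3*e 5 + e 0*e 2*e 3*e 6 + e 0*e 2*e 4*e 5 + e 0*e 2*e 4*e 6 + e 0*e 2*e 5*e 6 + e 0*e 3*e 4*e 5 + e 0*e 3*e 4*e 6 + e 0*e 3*e 5*e 6 + e 0*e 4*e 5*e 6 + e 1*e 2*e 3*e 4 + e 1*e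 2*e 3*e 5 + e 1*e 2*e 3*e 6 + e 1*e 2*e 4*e 5 + e 1*e 2*e 4*e 6 + e 1*e 2*e 5*e 6 + e 1*e 3*e 4*e 5 + e 1*e 3*e 4*e 6 + e 1*e 3*e 5*e 6 + e 1*e 4*e 5*e 6 + e 2*e 3*e 4*e 5 + e 2*e 3*e 4*e 6 + e 2*e 3*e 5*e 6 + e 2*e 4*e 5*e 6 + e 3*e 4*e 5*e 6)) * X^3 + C (-(4:ℂ) * (e 0*e 1*e 2 + e 0*e 1*e 3 + e 0*e 1*e 4 + e 0*e 1*e 5 + e 0*e 1*e 6 + e 0*e 2*e 3 + e 0*e 2*e 4 + e 0*e 2*e 5 + e 0*e 2*e 6 + e 0*e 3*e 4 + e 0*e 3*e 5 + e 0*e 3*e 6 + e 0*e 4*e 5 + e 0*e 4*e 6 + e 0*e 5*e 6 + e 1*e 2*e 3 + e 1*e 2*e 4 + e 1*e 2*e 5 + e 1*e 2*e 6 + e 1*e 3*e 4 + e 1*e 3*e 5 + e 1*e 3*e 6 + e 1*e 4*e 5 + e 1*e 4*e 6 + e 1*e 5*e 6 + e 2*e 3*e 4 + e 2*e 3*e 5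 + e 2*e 3*e 6 + e 2*e 4*e 5 + e 2*e 4*e 6 + e 2*e 5*e 6 + e 3*e 4*e 5 + e 3*e 4*e 6 + e 3*e 5*e 6 + e 4*e 5*e 6)) * X^4 + C ((4:ℂ) * (e 0*e 1 + e 0*e 2 + e 0*e 3 + e 0*e 4 + e 0*e 5 + e 0*e 6 + e 1*e 2 + e 1*e 3 + e 1*e 4 + e 1*e 5 + e 1*e 6 + e 2*e 3 + e 2*e 4 + e 2*e 5 + e 2*e 6 + e 3*e 4 + e 3*e 5 + e 3*e 6 + e 4*e 5 + e 4*e 6 + e 5*e 6)) * X^5 + C (-(4:ℂ) * (e 0 + e 1 + e 2 + e 3 + e 4 + e 5 + e 6)) * X^6 + C 4 * X^7 := by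
    rw [Fin.prod_univ_seven]
    simp only [map_mul, map_add, map_neg, map_ofNat, map_one]
    ring
  have hl0 : lam 0 = (-(4:ℂ) * (e 0*e 1*e 2*e 3*e 4*e 5*e 6)) := by
    rw [hlam, hexp]
    simp only [coeff_add, coeff_C_mul, coeff_X_pow, coeff_C]
    norm_num
  have hl1 : lam 1 = ((4:ℂ) * (e 0*e 1*e 2*e 3*e 4*e 5 + e 0*e 1*e 2*e 3*e 4*e 6 + e 0*e 1*e 2*e 3*e 5*e 6 + e 0*e 1*e 2*e 4*e 5*e 6 + e 0*e 1*e 3*e 4*e 5*e 6 + e 0*e 2*e 3*e 4*e 5*e 6 + e 1*e 2*e 3*e 4*e 5*e 6)) := by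
    rw [hlam, hexp]
    simp only [coeff_add, coeff_C_mul, coeff_X_pow, coeff_C]
    norm_num
  have hl2 : lam 2 = (-(4:ℂ) * (e 0*e 1*e 2*e 3*e 4 + e 0*e 1*e 2*e 3*e 5 + e 0*e 1*e 2*e 3*e 6 + e 0*e 1*e 2*e 4*e 5 + e 0*e 1*e 2*e 4*e 6 + e 0*e 1*e 2*e 5*e 6 + e 0*e 1*e 3*e 4*e 5 + e 0*e 1*e 3*e 4*e 6 + e 0*e 1*e 3*e 5*e 6 + e 0*e 1*e 4*e 5*e 6 + e 0*e 2*e 3*e 4*e 5 + e 0*e 2*e 3*e 4*e 6 + e 0*e 2*e 3*e 5*e 6 + e 0*e 2*e 4*e 5*e 6 + e 0*e 3*e 4*e 5*e 6 + e 1*e 2*e 3*e 4*e 5 + e 1*e 2*e 3*e 4*e 6 + e 1*e 2*e 3*e 5*e 6 + e 1*e 2*e 4*e 5*e 6 + e 1*e 3*e 4*e 5*e 6 + e 2*e 3*e 4*e 5*e 6)) := by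
    rw [hlam, hexp]
    simp only [coeff_add, coeff_C_mul, coeff_X_pow, coeff_C]
    norm_num
  have hl3 : lam 3 = ((4:ℂ) * (e 0*e 1*e 2*e 3 + e 0*e 1*e 2*e 4 + e 0*e 1*e 2*e 5 + e 0*e 1*e 2*e 6 + e 0*e 1*e 3*e 4 + e 0*e 1*e 3*e 5 + e 0*e 1*e 3*e 6 + e 0*e 1*e 4*e 5 + e 0*e 1*e 4*e 6 + e 0*e 1*e 5*e 6 + e 0*e 2*e 3*e 4 + e 0*e 2*e 3*e 5 + e 0*e 2*e 3*e 6 + e 0*e 2*e 4*e 5 + e 0*e 2*e 4*e 6 + e 0*e 2*e 5*e 6 + e 0*e 3*e 4*e 5 + e 0*e 3*e 4*e 6 + e 0*e 3*e 5*e 6 + e 0*e 4*e 5*e 6 + e 1*e 2*e 3*e 4 + e 1*e 2*e 3*e 5 + e 1*e 2*e 3*e 6 + e 1*e 2*e 4*e 5 + e 1*e 2*e 4*e 6 + e 1*e 2*e 5*e 6 + e 1*e 3*e 4*e 5 + e 1*e 3*e 4*e 6 + e 1*e 3*e 5*e 6 + e 1*e 4*e 5*e 6 + e 2*e 3*e 4*e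 5 + e 2*e 3*e 4*e 6 + e 2*e 3*e 5*e 6 + e 2*e 4*e 5*e 6 + e 3*e 4*e 5*e 6)) := by
    rw [hlam, hexp]
    simp only [coeff_add, coeff_C_mul, coeff_X_pow, coeff_C]
    norm_num
  have hl4 : lam 4 = (-(4:ℂ) * (e 0*e 1*e 2 + e 0*e 1*e 3 + e 0*e 1*e 4 + e 0*e 1*e 5 + e 0*e 1*e 6 + e 0*e 2*e 3 + e 0*e 2*e 4 + e 0*e 2*e 5 + e 0*e 2*e 6 + e 0*e 3*e 4 + e 0*e 3*e 5 + e 0*e 3*e 6 + e 0*e 4*e 5 + e 0*e 4*e 6 + e 0*e 5*e 6 + e 1*e 2*e 3 + e 1*e 2*e 4 + e 1*e 2*e 5 + e 1*e 2*e 6 + e 1*e 3*e 4 + e 1*e 3*e 5 + e 1*e 3*e 6 + e 1*e 4*e 5 + e 1*e 4*e 6 + e 1*e 5*e 6 + e 2*e 3*e 4 + e 2*e 3*e 5 + e 2*e 3*e 6 + e 2*e 4*e 5 + e 2*e 4*e 6 + e 2*e 5*e 6 + e 3*e 4*e 5 + e 3*e 4*e 6 + e 3*e 5*e 6 + e 4*e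 5*e 6)) := by
    rw [hlam, hexp]
    simp only [coeff_add, coeff_C_mul, coeff_X_pow, coeff_C]
    norm_num
  have hl5 : lam 5 = ((4:ℂ) * (e 0*e 1 + e 0*e 2 + e 0*e 3 + e 0*e 4 + e 0*e 5 + e 0*e 6 + e 1*e 2 + e 1*e 3 + e 1*e 4 + e 1*e 5 + e 1*e 6 + e 2*e 3 + e 2*e 4 + e 2*e 5 + e 2*e 6 + e 3*e 4 + e 3*e 5 + e 3*e 6 + e 4*e 5 + e 4*e 6 + e 5*e 6)) := by
    rw [hlam, hexp]
    simp only [coeff_add, coeff_C_mul, coeff_X_pow, coeff_C]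
    norm_num
  have hl6 : lam 6 = (-(4:ℂ) * (e 0 + e 1 + e 2 + e 3 + e 4 + e 5 + e 6)) := by
    rw [hlam, hexp]
    simp only [coeff_add, coeff_C_mul, coeff_X_pow, coeff_C]
    norm_num
  have hl7 : lam 7 = (4:ℂ) := by
    rw [hlam, hexp]
    simp only [coeff_add, coeff_C_mul, coeff_X_pow, coeff_C]
    norm_num
  have hsv1 : s 1 = e 0 + e 1 + e 2 := by
    rw [hs, esymm, show Finset.powersetCard 1 ({0,1,2} : Finset (Fin 7)) = ({{0},{1},{2}} : Finset (Finset (Fin 7))) from by decide]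
    simp (config := { decide := true }) [Finset.sum_insert, Finset.prod_insert]
    ring
  have hsv2 : s 2 = e 0*e 1 + e 0*e 2 + e 1*e 2 := by
    rw [hs, esymm, show Finset.powersetCard 2 ({0,1,2} : Finset (Fin 7)) = ({{0,1},{0,2},{1,2}} : Finset (Finset (Fin 7))) from by decide]
    simp (config := { decide := true }) [Finset.sum_insert, Finset.prod_insert]
    ring
  have hsv3 : s 3 = e 0*e 1*e 2 := by
    rw [hs, esymm, show Finset.powersetCard 3 ({0,1,2} : Finset (Fin 7)) = ({{0,1,2}} : Finset (Finset (Fin 7))) from by decide]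
    simp (config := { decide := true }) [Finset.sum_insert, Finset.prod_insert]
    ring
  have hSv1 : S 1 = e 3 + e 4 + e 5 + e 6 := by
    rw [hS, esymm, show Finset.powersetCard 1 ({3,4,5,6} : Finset (Fin 7)) = ({{3},{4},{5},{6}} : Finset (Finset (Fin 7))) from by decide]
    simp (config := { decide := true }) [Finset.sum_insert, Finset.prod_insert]
    ring
  have hSv2 : S 2 = e 3*e 4 + e 3*e 5 + e 3*e 6 + e 4*e 5 + e 4*e 6 + e 5*e 6 := by
    rw [hS, esymm, show Finset.powersetCard 2 ({3,4,5,6} : Finset (Fin 7)) = ({{3,4},{3,5},{3,6},{4,5},{4,6},{5,6}} : Finset (Finset (Fin 7))) from by decide]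
    simp (config := { decide := true }) [Finset.sum_insert, Finset.prod_insert]
    ring
  have hSv3 : S 3 = e 3*e 4*e 5 + e 3*e 4*e 6 + e 3*e 5*e 6 + e 4*e 5*e 6 := by
    rw [hS, esymm, show Finset.powersetCard 3 ({3,4,5,6} : Finset (Fin 7)) = ({{3,4,5},{3,4,6},{3,5,6},{4,5,6}} : Finset (Finset (Fin 7))) from by decide]
    simp (config := { decide := true }) [Finset.sum_insert, Finset.prod_insert]
    ring
  have hSv4 : S 4 = e 3*e 4*e 5*e 6 := by
    rw [hS, esymm, show Finset.powersetCard 4 ({3,4,5,6} : Finset (Fin 7)) = ({{3,4,5,6}} : Finset (Finset (Fin 7))) from by decide]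
    simp (config := { decide := true }) [Finset.sum_insert, Finset.prod_insert]
    ring
  intro i j hi hj hij
  simp only [Finset.mem_insert, Finset.mem_singleton] at hi hj
  have hne : e i - e j ≠ 0 := sub_ne_zero.mpr (fun hc => hij (he hc))
  rw [hF, hP]
  simp only [Fin.sum_univ_three, Finset.sum_range_succ, Finset.sum_range_zero,
    Matrix.cons_val', Matrix.cons_val_zero, Matrix.cons_val_one, Matrix.head_cons,
    Matrix.empty_val', Matrix.cons_val_fin_one, Matrix.head_fin_const, Matrix.cons_val_two,
    Matrix.tail_cons, Matrix.of_apply, Fin.val_zero, Fin.val_one, Fin.val_two, pow_zero, pow_one]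
  rw [hl0, hl1, hl2, hl3, hl4, hl5, hl6, hl7, hsv1, hsv2, hsv3, hSv1, hSv2, hSv3, hSv4]
  rcases hi with hi | hi | hi <;> rcases hj with hj | hj | hj <;> subst hi <;> subst hj <;>
    first
    | exact absurd rfl hij
    | (field_simp
       ring)
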